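/- Let N ≥ 2, m ≥ 1, and let B be an N×N skew-symmetric integer matrix. Set B(1) = B and B(i+1) = μ_i(B(i)) for 1 ≤ i ≤ m, suppose that node i is a sink of B(i) for i = 1, 2, …, m, and suppose B(m+1) = ρ^m B ρ^{−m} (so B is a period m sink-type matrix). Then the matrix C := Σ_{i=1}^{m} ρ^{−(i−1)} B(i) ρ^{i−1} satisfies μ₁(C) = ρ C ρ⁻¹, i.e. C has mutation period 1. -/

import Mathlib

open Matrix

/-- The cyclic permutation matrix ρ: ρ_{i+1,i} = 1 (1-based), ρ_{1,N} = 1. -/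
def rhoM (N : ℕ) : Matrix (Fin N) (Fin N) ℤ :=
  Matrix.of fun i j => if (i : ℕ) = ((j : ℕ) + 1) % N then 1 else 0

/-- The skew-rotation τ: equal to ρ except τ_{1,N} = −1. -/
def tauM (N : ℕ) : Matrix (Fin N) (Fin N) ℤ :=
  Matrix.of fun i j =>
    if (i : ℕ) = ((j : ℕ) + 1) % N then (if (j : ℕ) + 1 = N then -1 else 1) else 0

/-- Fomin–Zelevinsky matrix mutation at node `k`. -/
def mutB {N : ℕ} (k : Fin N) (B : Matrix (Fin N) (Fin N) ℤ) : Matrix (Fin N) (Fin N) ℤ :=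
  Matrix.of fun i j =>
    if i = k ∨ j = k then -B i j
    else B i j + (|B i k| * B k j + B i k * |B k j|) / 2

/-- Node `k` is a sink of `B` if all entries of column `k` are nonnegative. -/
def IsSink {N : ℕ} (k : Fin N) (B : Matrix (Fin N) (Fin N) ℤ) : Prop :=
  ∀ i, 0 ≤ B i k


/-- Mutation at node `i+1` (1-based), i.e. at the vertex with 0-based index `i % N`. -/
def mutAt (N : ℕ) (i : ℕ) (B : Matrix (Fin N) (Fin N) ℤ) : Matrix (Fin N) (Fin N) ℤ :=
  if h : 0 < N then mutB ⟨i % N, Nat.mod_lt _ h⟩ B else B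

/-- The chain of mutations `B(1), B(2), …` (0-based: `mutChain B i = B(i+1)`),
where `B(1) = B` and `B(i+1) = μ_i(B(i))`. -/
def mutChain {N : ℕ} (B : Matrix (Fin N) (Fin N) ℤ) : ℕ → Matrix (Fin N) (Fin N) ℤ
  | 0 => B
  | i + 1 => mutAt N i (mutChain B i)

open Fin.NatCast

section Aux
variable {N : ℕ} [NeZero N]

lemma val_one_aux (hN : 2 ≤ N) : ((1 : Fin N) : ℕ) = 1 := by
  rw [Fin.val_one', Nat.mod_eq_of_lt (by omega)]

lemma rho_apply (hN : 2 ≤ N) (i j : Fin N) : rhoM N i j = if i = j + 1 then 1 else 0 := by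
  unfold rhoM
  simp only [Matrix.of_apply, Fin.ext_iff, Fin.val_add, val_one_aux hN]

lemma mul_rho (hN : 2 ≤ N) (A : Matrix (Fin N) (Fin N) ℤ) (i j : Fin N) :
    (A * rhoM N) i j = A i (j + 1) := by
  simp [Matrix.mul_apply, rho_apply hN, eq_comm]

lemma rhoT_mul (hN : 2 ≤ N) (A : Matrix (Fin N) (Fin N) ℤ) (i j : Fin N) :
    ((rhoM N)ᵀ * A) i j = A (i + 1) j := by
  simp [Matrix.mul_apply, rho_apply hN, Matrix.transpose_apply]

lemma rho_mul_rhoT (hN : 2 ≤ N) : rhoM N * (rhoM N)ᵀ = 1 := by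
  ext i j
  simp only [Matrix.mul_apply, rho_apply hN, Matrix.transpose_apply, Matrix.one_apply]
  have hc : ∀ k : Fin N, (i = k + 1) = (k = i - 1) := by
    intro k; rw [eq_iff_iff, eq_sub_iff_add_eq, eq_comm]
  simp_rw [hc, ite_mul, one_mul, zero_mul, Finset.sum_ite_eq' Finset.univ, Finset.mem_univ,
    if_true, sub_add_cancel]
  simp [eq_comm]

lemma rhoT_mul_rho (hN : 2 ≤ N) : (rhoM N)ᵀ * rhoM N = 1 :=
  mul_eq_one_comm.mp (rho_mul_rhoT hN)

lemma rho_inv (hN : 2 ≤ N) : (rhoM N)⁻¹ = (rhoM N)ᵀ :=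
  Matrix.inv_eq_right_inv (rho_mul_rhoT hN)

lemma powT_mul_pow (hN : 2 ≤ N) (k : ℕ) : ((rhoM N)ᵀ) ^ k * (rhoM N) ^ k = 1 := by
  induction k with
  | zero => simp
  | succ k ih =>
    rw [pow_succ, pow_succ', mul_assoc, ← mul_assoc ((rhoM N)ᵀ), rhoT_mul_rho hN, one_mul, ih]

lemma conj_apply (hN : 2 ≤ N) (k : ℕ) (A : Matrix (Fin N) (Fin N) ℤ) (i j : Fin N) :
    (((rhoM N)ᵀ) ^ k * A * (rhoM N) ^ k) i j = A (i + (k : Fin N)) (j + (k : Fin N)) := by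
  induction k generalizing A with
  | zero => simp
  | succ k ih =>
    have h : ((rhoM N)ᵀ) ^ (k+1) * A * (rhoM N) ^ (k+1)
        = ((rhoM N)ᵀ) ^ k * ((rhoM N)ᵀ * A * rhoM N) * (rhoM N) ^ k := by
      rw [pow_succ ((rhoM N)ᵀ) k, pow_succ' (rhoM N) k]
      simp only [Matrix.mul_assoc]
    rw [h, ih]
    rw [show (((rhoM N)ᵀ * A * rhoM N)) = ((rhoM N)ᵀ * A) * rhoM N from rfl]
    rw [mul_rho hN, rhoT_mul hN]
    have hcast : ((↑(k+1) : Fin N)) = (k : Fin N) + 1 := by push_cast; ring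
    rw [hcast, ← add_assoc, ← add_assoc]

lemma mutB_sink {k : Fin N} {A : Matrix (Fin N) (Fin N) ℤ} (hsk : Aᵀ = -A) (hs : IsSink k A) :
    mutB k A = Matrix.of fun i j => if i = k ∨ j = k then -A i j else A i j := by
  ext i j
  unfold mutB
  simp only [Matrix.of_apply]
  split
  · rfl
  · have h1 : 0 ≤ A i k := hs i
    have h2 : A k j = -A j k := by
      have := congrFun (congrFun hsk j) k
      simp only [Matrix.transpose_apply, Matrix.neg_apply] at this
      linarith
    have h2' : A k j ≤ 0 := by have := hs j; linarith
    rw [abs_of_nonneg h1, abs_of_nonpos h2',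
      show A i k * A k j + A i k * -A k j = 0 by ring]
    simp

lemma mutB_sink_skew {k : Fin N} {A : Matrix (Fin N) (Fin N) ℤ} (hsk : Aᵀ = -A)
    (hs : IsSink k A) : (mutB k A)ᵀ = -(mutB k A) := by
  rw [mutB_sink hsk hs]
  ext i j
  simp only [Matrix.transpose_apply, Matrix.of_apply, Matrix.neg_apply]
  have hA : A j i = -A i j := by
    have := congrFun (congrFun hsk i) j
    simp only [Matrix.transpose_apply, Matrix.neg_apply] at this
    linarith
  by_cases h : i = k ∨ j = k
  all_goals first
    | (simp only [if_pos (Or.symm h), if_pos h, hA, neg_neg])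
    | (simp only [if_neg (fun hc => h (Or.symm hc)), if_neg h, hA])

lemma mutAt_eq (hN : 2 ≤ N) (i : ℕ) (A : Matrix (Fin N) (Fin N) ℤ) :
    mutAt N i A = mutB ((i : ℕ) : Fin N) A := by
  have h0 : 0 < N := by omega
  have hk : ((i : ℕ) : Fin N) = ⟨i % N, Nat.mod_lt _ h0⟩ := by
    ext; simp [Fin.val_natCast]
  rw [mutAt, dif_pos h0, hk]

end Aux

/-- If `B` is a period `m` sink-type matrix, then
`C = Σ_{i=1}^m ρ^{−(i−1)} B(i) ρ^{i−1}` has mutation period 1. -/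
theorem stmt8 (N m : ℕ) (hN : 2 ≤ N) (hm : 1 ≤ m)
    (B : Matrix (Fin N) (Fin N) ℤ) (hskew : Bᵀ = -B)
    (hsink : ∀ i < m, IsSink ⟨i % N, Nat.mod_lt _ (by omega)⟩ (mutChain B i))
    (hper : mutChain B m = rhoM N ^ m * B * ((rhoM N)⁻¹) ^ m) :
    mutB ⟨0, by omega⟩ (∑ i ∈ Finset.range m, ((rhoM N)⁻¹) ^ i * mutChain B i * rhoM N ^ i)
      = rhoM N * (∑ i ∈ Finset.range m, ((rhoM N)⁻¹) ^ i * mutChain B i * rhoM N ^ i)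
        * (rhoM N)⁻¹ := by
  haveI : NeZero N := ⟨by omega⟩
  rw [rho_inv hN] at hper ⊢
  have hsink' : ∀ i, i < m → IsSink ((i : ℕ) : Fin N) (mutChain B i) := by
    intro i hi
    have hk : ((i : ℕ) : Fin N) = (⟨i % N, Nat.mod_lt _ (by omega)⟩ : Fin N) := by
      ext; simp [Fin.val_natCast]
    rw [hk]; exact hsink i hi
  have hskewc : ∀ i, i ≤ m → (mutChain B i)ᵀ = -(mutChain B i) := by
    intro i hi
    induction i with
    | zero => exact hskew
    | succ i ih =>
      rw [show mutChain B (i+1) = mutAt N i (mutChain B i) from rfl, mutAt_eq hN]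
      exact mutB_sink_skew (ih (by omega)) (hsink' i (by omega))
  -- the conjugated chain step
  have hstep : ∀ i, i < m → ((rhoM N)ᵀ) ^ i * mutChain B (i+1) * (rhoM N) ^ i
      = Matrix.of (fun a b => if a = 0 ∨ b = 0
          then -((((rhoM N)ᵀ) ^ i * mutChain B i * (rhoM N) ^ i) a b)
          else (((rhoM N)ᵀ) ^ i * mutChain B i * (rhoM N) ^ i) a b) := by
    intro i hi
    ext a b
    simp only [Matrix.of_apply, conj_apply hN]
    rw [show mutChain B (i+1) = mutAt N i (mutChain B i) from rfl, mutAt_eq hN,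
      mutB_sink (hskewc i (by omega)) (hsink' i hi)]
    simp only [Matrix.of_apply, add_eq_right]
  -- sink and skew of C
  have hCskew : (∑ i ∈ Finset.range m, ((rhoM N)ᵀ) ^ i * mutChain B i * (rhoM N) ^ i)ᵀ
      = -(∑ i ∈ Finset.range m, ((rhoM N)ᵀ) ^ i * mutChain B i * (rhoM N) ^ i) := by
    rw [Matrix.transpose_sum, ← Finset.sum_neg_distrib]
    refine Finset.sum_congr rfl fun i hi => ?_
    ext a b
    simp only [Matrix.transpose_apply, Matrix.neg_apply, conj_apply hN]
    have := congrFun (congrFun (hskewc i (le_of_lt (Finset.mem_range.mp hi))) (a + (i : Fin N))) (b + (i : Fin N))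
    simp only [Matrix.transpose_apply, Matrix.neg_apply] at this
    linarith
  have hCsink : IsSink (0 : Fin N)
      (∑ i ∈ Finset.range m, ((rhoM N)ᵀ) ^ i * mutChain B i * (rhoM N) ^ i) := by
    intro a
    rw [Matrix.sum_apply]
    refine Finset.sum_nonneg fun i hi => ?_
    rw [conj_apply hN, zero_add]
    exact hsink' i (Finset.mem_range.mp hi) _
  have h0 : (⟨0, by omega⟩ : Fin N) = 0 := rfl
  rw [h0, mutB_sink hCskew hCsink]
  -- turn the mutated sum into the sum of conjugated next-step matrices
  have hsum : Matrix.of (fun a b => if a = 0 ∨ b = 0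
        then -((∑ i ∈ Finset.range m, ((rhoM N)ᵀ) ^ i * mutChain B i * (rhoM N) ^ i) a b)
        else (∑ i ∈ Finset.range m, ((rhoM N)ᵀ) ^ i * mutChain B i * (rhoM N) ^ i) a b)
      = ∑ i ∈ Finset.range m, ((rhoM N)ᵀ) ^ i * mutChain B (i+1) * (rhoM N) ^ i := by
    rw [Finset.sum_congr rfl fun i hi => hstep i (Finset.mem_range.mp hi)]
    ext a b
    simp only [Matrix.of_apply, Matrix.sum_apply]
    split
    · rw [← Finset.sum_neg_distrib]
    · rfl
  rw [hsum]
  -- reindex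
  obtain ⟨n, rfl⟩ : ∃ n, m = n + 1 := ⟨m - 1, by omega⟩
  rw [Finset.mul_sum, Finset.sum_mul, Finset.sum_range_succ, Finset.sum_range_succ']
  have key : ∀ (X : Matrix (Fin N) (Fin N) ℤ) (i : ℕ),
      rhoM N * (((rhoM N)ᵀ) ^ (i+1) * X * (rhoM N) ^ (i+1)) * (rhoM N)ᵀ
        = ((rhoM N)ᵀ) ^ i * X * (rhoM N) ^ i := by
    intro X i
    rw [pow_succ' ((rhoM N)ᵀ), pow_succ (rhoM N)]
    simp only [← Matrix.mul_assoc]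
    rw [rho_mul_rhoT hN, one_mul, Matrix.mul_assoc _ (rhoM N) ((rhoM N)ᵀ),
      rho_mul_rhoT hN, mul_one]
  have hlast : ((rhoM N)ᵀ) ^ n * mutChain B (n+1) * (rhoM N) ^ n
      = rhoM N * (((rhoM N)ᵀ) ^ 0 * mutChain B 0 * (rhoM N) ^ 0) * (rhoM N)ᵀ := by
    rw [hper]
    rw [show mutChain B 0 = B from rfl]
    rw [pow_zero, pow_zero, one_mul, mul_one]
    rw [pow_succ (rhoM N) n, pow_succ' ((rhoM N)ᵀ) n]
    simp only [← Matrix.mul_assoc]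
    rw [powT_mul_pow hN, one_mul]
    simp only [Matrix.mul_assoc]
    rw [powT_mul_pow hN, mul_one]
  rw [hlast]
  congr 1
  refine Finset.sum_congr rfl fun i _ => ?_
  rw [key]
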